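/- Let M be a geodesic metric space, f : M → ℝ a Lipschitz function with Lipschitz constant > c for some c > 0. Then there exist infinitely many points a ∈ M such that for every δ > 0, the restriction of f to the closed ball B(a, δ) has Lipschitz constant > c. More precisely, the set of such points a is infinite whenever M is geodesic (hence has no isolated points relevant to the construction) and ‖f‖_Lip > c. -/

import Mathlib

open Metric Set

/-- A metric space is geodesic if any two distinct points are joined by an isometric curve. -/
def IsGeodesicSpace (M : Type*) [MetricSpace M] : Prop :=
  ∀ x y : M, x ≠ y → ∃ α : ℝ → M, α 0 = x ∧ α (dist x y) = y ∧
    ∀ s ∈ Set.Icc (0 : ℝ) (dist x y), ∀ t ∈ Set.Icc (0 : ℝ) (dist x y),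
      dist (α s) (α t) = |s - t|

/-- If a real function is locally `c`-Lipschitz on `[p,q]`, it satisfies the global
`c`-bound at the endpoints. -/
lemma locLip_aux (g : ℝ → ℝ) (c p q : ℝ) (hpq : p ≤ q)
    (h : ∀ s ∈ Icc p q, ∃ η > 0, ∀ u ∈ Icc p q ∩ Icc (s - η) (s + η),
      ∀ v ∈ Icc p q ∩ Icc (s - η) (s + η), |g u - g v| ≤ c * |u - v|) :
    |g q - g p| ≤ c * (q - p) := by
  set T : Set ℝ := {t | t ∈ Icc p q ∧ |g t - g p| ≤ c * (t - p)} with hT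
  have hpT : p ∈ T := ⟨⟨le_refl p, hpq⟩, by simp⟩
  have hbdd : BddAbove T := ⟨q, fun t ht => ht.1.2⟩
  set m := sSup T with hm
  have hmq : m ≤ q := csSup_le ⟨p, hpT⟩ (fun t ht => ht.1.2)
  have hpm : p ≤ m := le_csSup hbdd hpT
  obtain ⟨η, hη, hloc⟩ := h m ⟨hpm, hmq⟩
  obtain ⟨t, htT, hlt⟩ := exists_lt_of_lt_csSup ⟨p, hpT⟩ (show m - η < m by linarith)
  have htm : t ≤ m := le_csSup hbdd htT
  have hmem_m : m ∈ Icc p q ∩ Icc (m - η) (m + η) :=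
    ⟨⟨hpm, hmq⟩, ⟨by linarith, by linarith⟩⟩
  have hmem_t : t ∈ Icc p q ∩ Icc (m - η) (m + η) :=
    ⟨htT.1, ⟨by linarith, by linarith⟩⟩
  have hmT : m ∈ T := by
    refine ⟨⟨hpm, hmq⟩, ?_⟩
    have h1 : |g m - g t| ≤ c * |m - t| := hloc m hmem_m t hmem_t
    have h2 : |m - t| = m - t := abs_of_nonneg (by linarith)
    have h3 : |g m - g p| ≤ |g m - g t| + |g t - g p| := abs_sub_le _ _ _
    have h4 := htT.2
    rw [h2] at h1
    nlinarith
  rcases eq_or_lt_of_le hmq with heq | hlt'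
  · rw [← heq]; exact hmT.2
  · exfalso
    set t' := min q (m + η) with ht'
    have hmt' : m < t' := lt_min hlt' (by linarith)
    have ht'q : t' ≤ q := min_le_left _ _
    have hmem_t' : t' ∈ Icc p q ∩ Icc (m - η) (m + η) :=
      ⟨⟨by linarith, ht'q⟩, ⟨by linarith, min_le_right _ _⟩⟩
    have h1 : |g t' - g m| ≤ c * |t' - m| := hloc t' hmem_t' m hmem_m
    have h2 : |t' - m| = t' - m := abs_of_nonneg (by linarith)
    rw [h2] at h1
    have h3 : |g t' - g p| ≤ |g t' - g m| + |g m - g p| := abs_sub_le _ _ _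
    have ht'T : t' ∈ T := ⟨hmem_t'.1, by nlinarith [hmT.2]⟩
    have := le_csSup hbdd ht'T
    linarith

/-- Key induction: if the set `G` of "good points" intersected with `[p,q]` is contained in
a finset of cardinality at most `n`, then `g` is `c`-Lipschitz on endpoints up to any `ε`. -/
lemma finGood_aux (g : ℝ → ℝ) (c K L : ℝ) (hc : 0 < c) (hK : 0 ≤ K)
    (hlip : ∀ u ∈ Icc (0:ℝ) L, ∀ v ∈ Icc (0:ℝ) L, |g u - g v| ≤ K * |u - v|)
    (G : Set ℝ)
    (hG : ∀ s ∈ Icc (0:ℝ) L, s ∉ G → ∃ η > 0, ∀ u ∈ Icc (0:ℝ) L ∩ Icc (s - η) (s + η),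
        ∀ v ∈ Icc (0:ℝ) L ∩ Icc (s - η) (s + η), |g u - g v| ≤ c * |u - v|) :
    ∀ (n : ℕ) (F : Finset ℝ), F.card ≤ n → ∀ p q : ℝ, p ∈ Icc (0:ℝ) L → q ∈ Icc (0:ℝ) L →
      p ≤ q → (G ∩ Icc p q ⊆ ↑F) → ∀ ε : ℝ, 0 < ε → |g q - g p| ≤ c * (q - p) + ε := by
  have base : ∀ p q : ℝ, p ∈ Icc (0:ℝ) L → q ∈ Icc (0:ℝ) L → p ≤ q →
      (∀ s ∈ Icc p q, s ∉ G) → |g q - g p| ≤ c * (q - p) := by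
    intro p q hp hq hpq hempty
    apply locLip_aux g c p q hpq
    intro s hs
    have hs01 : s ∈ Icc (0:ℝ) L := ⟨le_trans hp.1 hs.1, le_trans hs.2 hq.2⟩
    obtain ⟨η, hη, hloc⟩ := hG s hs01 (hempty s hs)
    refine ⟨η, hη, ?_⟩
    intro u hu v hv
    exact hloc u ⟨⟨le_trans hp.1 hu.1.1, le_trans hu.1.2 hq.2⟩, hu.2⟩
      v ⟨⟨le_trans hp.1 hv.1.1, le_trans hv.1.2 hq.2⟩, hv.2⟩
  intro n
  induction n with
  | zero =>
    intro F hF p q hp hq hpq hsub ε hε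
    have hFe : F = ∅ := Finset.card_eq_zero.mp (Nat.le_zero.mp hF)
    have : ∀ s ∈ Icc p q, s ∉ G := by
      intro s hs hsG
      have := hsub ⟨hsG, hs⟩
      simp [hFe] at this
    have := base p q hp hq hpq this
    linarith
  | succ n ih =>
    intro F hF p q hp hq hpq hsub ε hε
    by_cases hemp : ∀ s ∈ Icc p q, s ∉ G
    · have := base p q hp hq hpq hemp
      linarith
    · push_neg at hemp
      obtain ⟨s, hs, hsG⟩ := hemp
      have hsF : s ∈ F := hsub ⟨hsG, hs⟩
      set ρ := ε / (4 * (K + 1)) with hρdef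
      have hρ : 0 < ρ := by positivity
      set p' := max p (s - ρ) with hp'def
      set q' := min q (s + ρ) with hq'def
      have hpp' : p ≤ p' := le_max_left _ _
      have hp's : p' ≤ s := max_le hs.1 (by linarith)
      have hsq' : s ≤ q' := le_min hs.2 (by linarith)
      have hq'q : q' ≤ q := min_le_left _ _
      have hp'01 : p' ∈ Icc (0:ℝ) L := ⟨le_trans hp.1 hpp', by
        have := hq.2; have := hs.2; linarith⟩
      have hq'01 : q' ∈ Icc (0:ℝ) L := ⟨by have := hp.1; have := hs.1; linarith,
        le_trans hq'q hq.2⟩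
      have hcard : (F.erase s).card ≤ n := by
        rw [Finset.card_erase_of_mem hsF]; omega
      -- left piece
      have hleft : |g p' - g p| ≤ c * (p' - p) + ε / 4 := by
        rcases eq_or_lt_of_le hs.1 with heq | hlt
        · have : p' = p := by
            rw [hp'def, ← heq]; exact max_eq_left (by linarith)
          rw [this]
          simp only [sub_self, abs_zero, mul_zero, zero_add]
          positivity
        · have hp's' : p' < s := max_lt hlt (by linarith)
          refine ih (F.erase s) hcard p p' hp hp'01 hpp' ?_ (ε/4) (by linarith)
          intro t ht
          refine Finset.mem_erase.mpr ⟨?_, hsub ⟨ht.1, ⟨ht.2.1, le_trans ht.2.2 (le_trans hp's hs.2)⟩⟩⟩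
          have : t ≤ p' := ht.2.2
          intro h; rw [h] at this; linarith
      -- right piece
      have hright : |g q - g q'| ≤ c * (q - q') + ε / 4 := by
        rcases eq_or_lt_of_le hs.2 with heq | hlt
        · have : q' = q := by
            rw [hq'def, heq]; exact min_eq_left (by linarith)
          rw [this]
          simp only [sub_self, abs_zero, mul_zero, zero_add]
          positivity
        · have hq's : s < q' := lt_min hlt (by linarith)
          refine ih (F.erase s) hcard q' q hq'01 hq hq'q ?_ (ε/4) (by linarith)
          intro t ht
          refine Finset.mem_erase.mpr ⟨?_, hsub ⟨ht.1, ⟨le_trans (le_trans hs.1 hsq') ht.2.1, ht.2.2⟩⟩⟩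
          have : q' ≤ t := ht.2.1
          intro h; rw [h] at this; linarith
      -- middle piece
      have hmid : |g q' - g p'| ≤ ε / 2 := by
        have h1 : |g q' - g p'| ≤ K * |q' - p'| := hlip q' hq'01 p' hp'01
        have h2 : |q' - p'| = q' - p' := abs_of_nonneg (by linarith)
        have h3 : q' - p' ≤ 2 * ρ := by
          have := le_max_right p (s - ρ)
          have := min_le_right q (s + ρ)
          linarith
        have h4 : K * (q' - p') ≤ K * (2 * ρ) := by
          apply mul_le_mul_of_nonneg_left h3 hK
        have h5 : K * (2 * ρ) ≤ ε / 2 := by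
          have heq : ρ * (4 * (K + 1)) = ε := by
            rw [hρdef]; field_simp
          nlinarith [hρ, hK]
        rw [h2] at h1
        linarith
      have htri1 : |g q - g p| ≤ |g q - g q'| + |g q' - g p| := abs_sub_le _ _ _
      have htri2 : |g q' - g p| ≤ |g q' - g p'| + |g p' - g p| := abs_sub_le _ _ _
      have hsum : c * (q - q') + c * (q' - p') + c * (p' - p) = c * (q - p) := by ring
      have hnn : 0 ≤ c * (q' - p') := mul_nonneg hc.le (by linarith)
      linarith

theorem stmt17 {M : Type*} [MetricSpace M] (hgeo : IsGeodesicSpace M)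
    (f : M → ℝ) (K : NNReal) (hf : LipschitzWith K f) (c : ℝ) (hc : 0 < c)
    (hgt : ∃ x y : M, c * dist x y < |f x - f y|) :
    {a : M | ∀ δ : ℝ, 0 < δ →
      ∃ x ∈ closedBall a δ, ∃ y ∈ closedBall a δ, c * dist x y < |f x - f y|}.Infinite := by
  obtain ⟨x, y, hxy⟩ := hgt
  have hne : x ≠ y := by
    intro h
    rw [h] at hxy
    simp at hxy
  set L := dist x y with hLdef
  have hL : 0 < L := dist_pos.mpr hne
  obtain ⟨α, hα0, hαL, hiso⟩ := hgeo x y hne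
  set g : ℝ → ℝ := fun s => f (α s) with hg
  have hlip : ∀ u ∈ Icc (0:ℝ) L, ∀ v ∈ Icc (0:ℝ) L, |g u - g v| ≤ (K:ℝ) * |u - v| := by
    intro u hu v hv
    have h1 : dist (f (α u)) (f (α v)) ≤ (K:ℝ) * dist (α u) (α v) := hf.dist_le_mul _ _
    rw [hiso u hu v hv] at h1
    rw [Real.dist_eq] at h1
    exact h1
  set Gs : Set ℝ := {s | s ∈ Icc (0:ℝ) L ∧ ∀ η : ℝ, 0 < η →
      ∃ u ∈ Icc (0:ℝ) L ∩ Icc (s - η) (s + η), ∃ v ∈ Icc (0:ℝ) L ∩ Icc (s - η) (s + η),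
        c * |u - v| < |g u - g v|} with hGs
  have hgL : c * L < |g L - g 0| := by
    have h1 : g L = f y := by rw [hg]; simp [hLdef, hαL]
    have h2 : g 0 = f x := by rw [hg]; simp [hα0]
    rw [h1, h2, abs_sub_comm]
    exact hxy
  -- Gs is infinite
  have hGinf : Gs.Infinite := by
    by_contra hfin
    rw [Set.not_infinite] at hfin
    have hG : ∀ s ∈ Icc (0:ℝ) L, s ∉ Gs → ∃ η > 0,
        ∀ u ∈ Icc (0:ℝ) L ∩ Icc (s - η) (s + η),
        ∀ v ∈ Icc (0:ℝ) L ∩ Icc (s - η) (s + η), |g u - g v| ≤ c * |u - v| := by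
      intro s hs hsG
      have : ¬ (∀ η : ℝ, 0 < η →
          ∃ u ∈ Icc (0:ℝ) L ∩ Icc (s - η) (s + η), ∃ v ∈ Icc (0:ℝ) L ∩ Icc (s - η) (s + η),
            c * |u - v| < |g u - g v|) := fun hh => hsG ⟨hs, hh⟩
      push_neg at this
      obtain ⟨η, hη, hloc⟩ := this
      exact ⟨η, hη, hloc⟩
    set ε := (|g L - g 0| - c * L) / 2 with hεdef
    have hε : 0 < ε := by rw [hεdef]; linarith
    have := finGood_aux g c (K:ℝ) L hc K.coe_nonneg hlip Gs hG hfin.toFinset.card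
      hfin.toFinset le_rfl 0 L ⟨le_refl 0, hL.le⟩ ⟨hL.le, le_refl L⟩ hL.le
      (by intro t ht; rw [Set.Finite.coe_toFinset]; exact ht.1) ε hε
    rw [hεdef] at this
    linarith
  -- map into M
  have hinj : Set.InjOn α Gs := by
    intro s hs t ht h
    have h1 := hiso s hs.1 t ht.1
    rw [h, dist_self] at h1
    have := abs_eq_zero.mp h1.symm
    linarith [sub_eq_zero.mp this]
  have himg : α '' Gs ⊆ {a : M | ∀ δ : ℝ, 0 < δ →
      ∃ x ∈ closedBall a δ, ∃ y ∈ closedBall a δ, c * dist x y < |f x - f y|} := by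
    rintro _ ⟨s, hs, rfl⟩ δ hδ
    obtain ⟨u, ⟨hu01, huI⟩, v, ⟨hv01, hvI⟩, hlt⟩ := hs.2 δ hδ
    refine ⟨α u, ?_, α v, ?_, ?_⟩
    · rw [mem_closedBall, hiso u hu01 s hs.1]
      exact abs_le.mpr ⟨by linarith [huI.1], by linarith [huI.2]⟩
    · rw [mem_closedBall, hiso v hv01 s hs.1]
      exact abs_le.mpr ⟨by linarith [hvI.1], by linarith [hvI.2]⟩
    · rw [hiso u hu01 v hv01]
      exact hlt
  exact ((hGinf.image hinj).mono himg)
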